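/- Let k ≥ 2 and r ≥ 2 be integers and let q = (r^k − 1)/(r − 1). Every k-uniform hypergraph G with m edges contains a subhypergraph which has no copy of K^{(k)}_{r,...,r} and has at least (1/(2·k!))·m^{(q−1)/q} edges. -/

import Mathlib

open Finset

/-! ### Auxiliary lemmas on weighted sums over the powerset -/

section Weights
variable {β : Type*} [DecidableEq β]

lemma wsum_one (p : ℝ) (s : Finset β) :
    ∑ t ∈ s.powerset, p ^ t.card * (1 - p) ^ (s \ t).card = 1 := by
  have h := Finset.prod_add (fun _ : β => p) (fun _ : β => (1 : ℝ) - p) s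
  simp only [Finset.prod_const] at h
  rw [← h]
  simp

lemma wsum_supset (p : ℝ) (s E : Finset β) (hE : E ⊆ s) :
    ∑ t ∈ s.powerset.filter (fun t => E ⊆ t), p ^ t.card * (1 - p) ^ (s \ t).card
      = p ^ E.card := by
  have h1 : (p : ℝ) ^ E.card
      = ∑ u ∈ (s \ E).powerset, p ^ E.card * (p ^ u.card * (1 - p) ^ ((s \ E) \ u).card) := by
    rw [← Finset.mul_sum, wsum_one, mul_one]
  rw [h1]
  refine Finset.sum_nbij' (fun t => t \ E) (fun u => E ∪ u) ?_ ?_ ?_ ?_ ?_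
  · intro t ht
    simp only [Finset.mem_filter, Finset.mem_powerset] at ht ⊢
    exact Finset.sdiff_subset_sdiff ht.1 Finset.Subset.rfl
  · intro u hu
    simp only [Finset.mem_powerset] at hu
    simp only [Finset.mem_filter, Finset.mem_powerset]
    exact ⟨Finset.union_subset hE (hu.trans Finset.sdiff_subset), Finset.subset_union_left⟩
  · intro t ht
    simp only [Finset.mem_filter, Finset.mem_powerset] at ht
    exact Finset.union_sdiff_of_subset ht.2
  · intro u hu
    simp only [Finset.mem_powerset] at hu
    refine Finset.union_sdiff_cancel_left ?_
    exact Finset.disjoint_left.mpr (fun a haE hau => (Finset.mem_sdiff.mp (hu hau)).2 haE)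
  · intro t ht
    simp only [Finset.mem_filter, Finset.mem_powerset] at ht
    have hdisj : Disjoint E (t \ E) := Finset.disjoint_sdiff
    have hcard : t.card = E.card + (t \ E).card := by
      rw [← Finset.card_union_of_disjoint hdisj, Finset.union_sdiff_of_subset ht.2]
    have hsd : s \ t = (s \ E) \ (t \ E) := by
      rw [sdiff_sdiff_left, sup_eq_union, Finset.union_sdiff_of_subset ht.2]
    rw [hcard, hsd, pow_add, mul_assoc]

lemma wsum_indicator (p : ℝ) (s E : Finset β) (hE : E ⊆ s) :
    ∑ t ∈ s.powerset, (p ^ t.card * (1 - p) ^ (s \ t).card) * (if E ⊆ t then (1:ℝ) else 0)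
      = p ^ E.card := by
  rw [← wsum_supset p s E hE, Finset.sum_filter]
  exact Finset.sum_congr rfl (fun t _ => by split <;> simp)

lemma wsum_card (p : ℝ) (s : Finset β) :
    ∑ t ∈ s.powerset, (p ^ t.card * (1 - p) ^ (s \ t).card) * (t.card : ℝ)
      = p * s.card := by
  have key : ∀ t ∈ s.powerset, ((t.card : ℝ))
      = ∑ e ∈ s, (if ({e} : Finset β) ⊆ t then (1:ℝ) else 0) := by
    intro t ht
    simp only [Finset.singleton_subset_iff]
    rw [Finset.sum_ite_mem, Finset.inter_eq_right.mpr (Finset.mem_powerset.mp ht)]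
    simp
  calc ∑ t ∈ s.powerset, (p ^ t.card * (1 - p) ^ (s \ t).card) * (t.card : ℝ)
      = ∑ t ∈ s.powerset, ∑ e ∈ s,
          (p ^ t.card * (1 - p) ^ (s \ t).card) * (if ({e} : Finset β) ⊆ t then (1:ℝ) else 0) := by
        refine Finset.sum_congr rfl (fun t ht => ?_)
        rw [← Finset.mul_sum, ← key t ht]
    _ = ∑ e ∈ s, ∑ t ∈ s.powerset,
          (p ^ t.card * (1 - p) ^ (s \ t).card) * (if ({e} : Finset β) ⊆ t then (1:ℝ) else 0) :=
        Finset.sum_comm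
    _ = ∑ e ∈ s, p := by
        refine Finset.sum_congr rfl (fun e he => ?_)
        rw [wsum_indicator p s {e} (Finset.singleton_subset_iff.mpr he)]
        simp
    _ = p * s.card := by rw [Finset.sum_const]; simp [mul_comm]

end Weights

/-- A copy of the complete `k`-partite `k`-graph `K^{(k)}_{r,…,r}` in the `k`-uniform
hypergraph `G`: `k` pairwise disjoint `r`-element vertex sets `S 0, …, S (k-1)` such that
every set `{s₁, …, s_k}` with `s_i ∈ S i` for each `i` is an edge of `G`. -/
def HasKrrrCopy {α : Type*} [DecidableEq α] (G : Finset (Finset α)) (k r : ℕ) : Prop :=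
  ∃ S : Fin k → Finset α, (∀ i, (S i).card = r) ∧
    (∀ i j, i ≠ j → Disjoint (S i) (S j)) ∧
    ∀ g : Fin k → α, (∀ i, g i ∈ S i) → Finset.image g Finset.univ ∈ G

/-! ### Grid maps -/

section Grid
variable {α : Type*} [DecidableEq α]

/-- The product edge of a grid map `φ` determined by selector `g`. -/
def pedge (k r : ℕ) (φ : Fin k × Fin r → α) (g : Fin k → Fin r) : Finset α :=
  Finset.image (fun i => φ (i, g i)) Finset.univ

/-- All product edges of a grid map. -/
def pedges (k r : ℕ) (φ : Fin k × Fin r → α) : Finset (Finset α) :=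
  Finset.image (pedge k r φ) Finset.univ

open scoped Classical in
/-- Grid maps whose vertices live in the support of `G` and whose product edges lie in `H`. -/
noncomputable def gridset (k r : ℕ) (G H : Finset (Finset α)) :
    Finset ((Fin k × Fin r) → α) :=
  (Fintype.piFinset (fun _ : Fin k × Fin r => G.sup id)).filter
    (fun φ => Function.Injective φ ∧ pedges k r φ ⊆ H)

lemma not_copy_empty {k r : ℕ} (hr : 0 < r) :
    ¬ HasKrrrCopy (∅ : Finset (Finset α)) k r := by
  rintro ⟨S, hcard, -, hedge⟩
  have hne : ∀ i, (S i).Nonempty := fun i => Finset.card_pos.mp (by rw [hcard i]; exact hr)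
  exact absurd (hedge (fun i => (hne i).choose) (fun i => (hne i).choose_spec))
    (Finset.notMem_empty _)

lemma pedge_injective {k r : ℕ} {φ : Fin k × Fin r → α} (hφ : Function.Injective φ) :
    Function.Injective (pedge k r φ) := by
  intro g g' h
  funext i
  have h1 : φ (i, g i) ∈ pedge k r φ g' := by
    rw [← h]; exact Finset.mem_image_of_mem _ (Finset.mem_univ i)
  obtain ⟨i', _, hi'⟩ := Finset.mem_image.mp h1
  have := hφ hi'.symm
  rw [Prod.mk.injEq] at this
  rw [this.2, this.1]

lemma pedges_card {k r : ℕ} {φ : Fin k × Fin r → α} (hφ : Function.Injective φ) :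
    (pedges k r φ).card = r ^ k := by
  rw [pedges, Finset.card_image_of_injective _ (pedge_injective hφ), Finset.card_univ,
    Fintype.card_fun, Fintype.card_fin, Fintype.card_fin]

lemma gridset_mono {k r : ℕ} {G H H' : Finset (Finset α)} (h : H' ⊆ H) :
    gridset k r G H' ⊆ gridset k r G H := by
  classical
  intro φ hφ
  simp only [gridset, Finset.mem_filter] at hφ ⊢
  exact ⟨hφ.1, hφ.2.1, hφ.2.2.trans h⟩

lemma copy_to_grid {k r : ℕ} {G H : Finset (Finset α)} (hHG : H ⊆ G)
    (hcopy : HasKrrrCopy H k r) : (gridset k r G H).Nonempty := by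
  classical
  obtain ⟨S, hcard, hdisj, hedge⟩ := hcopy
  have e : ∀ i, S i ≃ Fin r := fun i => (S i).equivFinOfCardEq (hcard i)
  refine ⟨fun x => ((e x.1).symm x.2 : α), ?_⟩
  have hinj : Function.Injective (fun x : Fin k × Fin r => ((e x.1).symm x.2 : α)) := by
    rintro ⟨i, j⟩ ⟨i', j'⟩ h
    simp only at h
    have hi : i = i' := by
      by_contra hne
      have h1 : ((e i).symm j : α) ∈ S i := ((e i).symm j).2
      have h2 : ((e i).symm j : α) ∈ S i' := h ▸ ((e i').symm j').2
      exact (Finset.disjoint_left.mp (hdisj i i' hne) h1) h2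
    subst hi
    have : (e i).symm j = (e i).symm j' := Subtype.ext h
    rw [(e i).symm.injective this]
  have hped : ∀ g : Fin k → Fin r,
      pedge k r (fun x : Fin k × Fin r => ((e x.1).symm x.2 : α)) g ∈ H := by
    intro g
    exact hedge (fun i => ((e i).symm (g i) : α)) (fun i => ((e i).symm (g i)).2)
  simp only [gridset, Finset.mem_filter, Fintype.mem_piFinset]
  refine ⟨?_, hinj, ?_⟩
  · rintro ⟨i, j⟩
    have hmem : ((e i).symm j : α) ∈ pedge k r (fun x : Fin k × Fin r => ((e x.1).symm x.2 : α))
        (fun _ => j) := Finset.mem_image_of_mem _ (Finset.mem_univ i)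
    have hin : pedge k r (fun x : Fin k × Fin r => ((e x.1).symm x.2 : α)) (fun _ => j) ∈ G :=
      hHG (hped _)
    exact Finset.mem_sup.mpr ⟨_, hin, hmem⟩
  · intro E hE
    obtain ⟨g, _, rfl⟩ := Finset.mem_image.mp hE
    exact hped g

/-- Deleting one product edge for each grid map yields a copy-free subgraph. -/
lemma deletion {k r : ℕ} (hr : 0 < r) {G H : Finset (Finset α)} (hHG : H ⊆ G) :
    ∃ G' : Finset (Finset α), G' ⊆ H ∧ ¬ HasKrrrCopy G' k r ∧
      H.card ≤ G'.card + (gridset k r G H).card := by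
  classical
  set bad : Finset (Finset α) :=
    (gridset k r G H).image (fun φ => pedge k r φ (fun _ => ⟨0, hr⟩)) with hbad
  refine ⟨H \ bad, Finset.sdiff_subset, ?_, ?_⟩
  · intro hcopy
    obtain ⟨φ, hφ⟩ := copy_to_grid (Finset.sdiff_subset.trans hHG) hcopy
    have hφH : φ ∈ gridset k r G H := gridset_mono Finset.sdiff_subset hφ
    have h0 : pedge k r φ (fun _ => ⟨0, hr⟩) ∈ bad :=
      Finset.mem_image_of_mem _ hφH
    have h0' : pedge k r φ (fun _ => ⟨0, hr⟩) ∈ H \ bad := by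
      simp only [gridset, Finset.mem_filter] at hφ
      exact hφ.2.2 (Finset.mem_image_of_mem _ (Finset.mem_univ _))
    exact (Finset.mem_sdiff.mp h0').2 h0
  · calc H.card ≤ ((H \ bad) ∪ bad).card := by
          refine Finset.card_le_card (fun x hx => ?_)
          by_cases hxb : x ∈ bad
          · exact Finset.mem_union_right _ hxb
          · exact Finset.mem_union_left _ (Finset.mem_sdiff.mpr ⟨hx, hxb⟩)
      _ ≤ (H \ bad).card + bad.card := Finset.card_union_le _ _
      _ ≤ (H \ bad).card + (gridset k r G H).card :=
          Nat.add_le_add_left Finset.card_image_le _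

open scoped Classical in
/-- Ordered edges: functions `Fin k → α` whose image is an edge of `G`. -/
noncomputable def oedges (k : ℕ) (G : Finset (Finset α)) : Finset (Fin k → α) :=
  (Fintype.piFinset (fun _ : Fin k => G.sup id)).filter
    (fun f => Finset.image f Finset.univ ∈ G)

lemma oedges_card {k : ℕ} {G : Finset (Finset α)} (huniform : ∀ e ∈ G, e.card = k) :
    (oedges k G).card ≤ k.factorial * G.card := by
  classical
  have hmap : ∀ f ∈ oedges k G, Finset.image f Finset.univ ∈ G := by
    intro f hf
    simp only [oedges, Finset.mem_filter] at hf
    exact hf.2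
  rw [Finset.card_eq_sum_card_fiberwise hmap]
  have hfib : ∀ e ∈ G,
      ((oedges k G).filter (fun f => Finset.image f Finset.univ = e)).card ≤ k.factorial := by
    intro e he
    have hek : e.card = k := huniform e he
    have hcard : Fintype.card (↥e) = k := by rw [Fintype.card_coe, hek]
    have hne : Nonempty (Fin k ↪ ↥e) :=
      Function.Embedding.nonempty_of_card_le (by rw [hcard, Fintype.card_fin])
    have hbound : ((oedges k G).filter (fun f => Finset.image f Finset.univ = e)).card
        ≤ Fintype.card (Fin k ↪ ↥e) := by
      rw [← Finset.card_univ]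
      refine Finset.card_le_card_of_injOn
        (fun f => if h : ∃ g : Fin k ↪ ↥e, ∀ i, ((g i : α) = f i) then h.choose
          else Classical.arbitrary _)
        (fun f _ => Finset.mem_univ _) ?_
      intro f hf f' hf' hff
      simp only [Finset.coe_filter, Set.mem_setOf_eq] at hf hf'
      have hex : ∀ f₀ : Fin k → α, f₀ ∈ oedges k G → Finset.image f₀ Finset.univ = e →
          ∃ g : Fin k ↪ ↥e, ∀ i, ((g i : α) = f₀ i) := by
        intro f₀ _ himg
        have hmem : ∀ i, f₀ i ∈ e := by
          intro i; rw [← himg]; exact Finset.mem_image_of_mem _ (Finset.mem_univ i)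
        have hinj : Function.Injective f₀ := by
          have hic : (Finset.image f₀ Finset.univ).card = (Finset.univ : Finset (Fin k)).card := by
            rw [himg, hek, Finset.card_univ, Fintype.card_fin]
          have := Finset.card_image_iff.mp hic
          intro a b hab
          exact this (Finset.mem_coe.mpr (Finset.mem_univ a))
            (Finset.mem_coe.mpr (Finset.mem_univ b)) hab
        exact ⟨⟨fun i => ⟨f₀ i, hmem i⟩, fun a b hab => hinj (Subtype.ext_iff.mp hab)⟩,
          fun i => rfl⟩
      have h1 := hex f hf.1 hf.2
      have h2 := hex f' hf'.1 hf'.2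
      beta_reduce at hff
      rw [dif_pos h1, dif_pos h2] at hff
      funext i
      rw [← h1.choose_spec i, ← h2.choose_spec i, hff]
    calc _ ≤ Fintype.card (Fin k ↪ ↥e) := hbound
      _ = (Fintype.card ↥e).descFactorial (Fintype.card (Fin k)) :=
        Fintype.card_embedding_eq
      _ = k.factorial := by rw [hcard, Fintype.card_fin, Nat.descFactorial_self]
  calc ∑ e ∈ G, ((oedges k G).filter (fun f => Finset.image f Finset.univ = e)).card
      ≤ ∑ _e ∈ G, k.factorial := Finset.sum_le_sum hfib
    _ = k.factorial * G.card := by rw [Finset.sum_const, smul_eq_mul, mul_comm]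

lemma gridset_card {k r : ℕ} {G : Finset (Finset α)} (huniform : ∀ e ∈ G, e.card = k) :
    (gridset k r G G).card ≤ (k.factorial * G.card) ^ r := by
  classical
  have h1 : (gridset k r G G).card ≤ (Fintype.piFinset (fun _ : Fin r => oedges k G)).card := by
    refine Finset.card_le_card_of_injOn (fun φ => fun j i => φ (i, j)) ?_ ?_
    · intro φ hφ
      simp only [Finset.mem_coe, gridset, Finset.mem_filter, Fintype.mem_piFinset] at hφ
      rw [Finset.mem_coe, Fintype.mem_piFinset]
      intro j
      simp only [oedges, Finset.mem_filter, Fintype.mem_piFinset]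
      refine ⟨fun i => hφ.1 (i, j), ?_⟩
      have : pedge k r φ (fun _ => j) ∈ pedges k r φ :=
        Finset.mem_image_of_mem _ (Finset.mem_univ _)
      exact hφ.2.2 this
    · intro φ _ φ' _ h
      funext ⟨i, j⟩
      exact congrFun (congrFun h j) i
  calc (gridset k r G G).card ≤ _ := h1
    _ = (oedges k G).card ^ r := by rw [Fintype.card_piFinset]; simp
    _ ≤ (k.factorial * G.card) ^ r := Nat.pow_le_pow_left (oedges_card huniform) r

end Grid

/-- **Large `K^{(k)}_{r,…,r}`-free subhypergraphs.** Let `k, r ≥ 2` and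
`q = (r^k − 1)/(r − 1)`. Every `k`-uniform hypergraph `G` with `m` edges contains a
subhypergraph with no copy of `K^{(k)}_{r,…,r}` and at least `(1/(2·k!)) m^{(q−1)/q}`
edges. -/
theorem stmt6 {α : Type*} [DecidableEq α] (k r q m : ℕ) (hk : 2 ≤ k) (hr : 2 ≤ r)
    (hq : q = (r ^ k - 1) / (r - 1))
    (G : Finset (Finset α)) (huniform : ∀ e ∈ G, e.card = k) (hm : G.card = m) :
    ∃ G' : Finset (Finset α), G' ⊆ G ∧ ¬ HasKrrrCopy G' k r ∧
      (1 / (2 * (Nat.factorial k : ℝ))) * (m : ℝ) ^ (((q : ℝ) - 1) / (q : ℝ))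
        ≤ (G'.card : ℝ) := by
  classical
  have hr1 : 0 < r := by omega
  have hdvd : (r - 1) ∣ (r ^ k - 1) := by
    simpa using Nat.sub_dvd_pow_sub_pow r 1 k
  have hqq : q * (r - 1) = r ^ k - 1 := by
    rw [hq]; exact Nat.div_mul_cancel hdvd
  have hrr : r + 2 ≤ r ^ k := by
    calc r + 2 ≤ r * r := by nlinarith
      _ = r ^ 2 := (sq r).symm
      _ ≤ r ^ k := Nat.pow_le_pow_right (by omega) hk
  have hq2 : 2 ≤ q := by
    by_contra hlt
    push_neg at hlt
    have h1 : q * (r - 1) ≤ 1 * (r - 1) := Nat.mul_le_mul_right _ (by omega)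
    have h2 : r ^ k - 1 ≤ 1 * (r - 1) := hqq ▸ h1
    omega
  rcases Nat.eq_zero_or_pos m with hm0 | hmpos
  · subst hm0
    refine ⟨∅, Finset.empty_subset _, not_copy_empty hr1, ?_⟩
    have hqe : ((q:ℝ) - 1) / (q:ℝ) ≠ 0 := by
      have h2 : (2:ℝ) ≤ (q:ℝ) := by exact_mod_cast hq2
      exact ne_of_gt (div_pos (by linarith) (by linarith))
    rw [Nat.cast_zero, Real.zero_rpow hqe]
    simp
  -- main case
  have hfac2 : 2 ≤ k.factorial := by
    calc 2 = Nat.factorial 2 := rfl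
      _ ≤ k.factorial := Nat.factorial_le hk
  have hnat : 2 * k.factorial ^ (r + 1) ≤ k.factorial ^ (r ^ k) := by
    calc 2 * k.factorial ^ (r + 1) ≤ k.factorial * k.factorial ^ (r + 1) :=
          Nat.mul_le_mul_right _ hfac2
      _ = k.factorial ^ (r + 2) := by ring
      _ ≤ k.factorial ^ (r ^ k) := Nat.pow_le_pow_right (by omega) hrr
  set F := (k.factorial : ℝ) with hF
  have hF0 : (0:ℝ) < F := by rw [hF]; exact_mod_cast k.factorial_pos
  have hF2 : (2:ℝ) ≤ F := by rw [hF]; exact_mod_cast hfac2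
  have hx0 : (0:ℝ) < (m:ℝ) := by exact_mod_cast hmpos
  have hx1 : (1:ℝ) ≤ (m:ℝ) := by exact_mod_cast hmpos
  have hQ0 : (0:ℝ) < (q:ℝ) := by exact_mod_cast (by omega : 0 < q)
  set y : ℝ := (m:ℝ) ^ (-(1/(q:ℝ))) with hy
  have hy0 : 0 < y := Real.rpow_pos_of_pos hx0 _
  have hy1 : y ≤ 1 := Real.rpow_le_one_of_one_le_of_nonpos hx1
    (neg_nonpos.mpr (by positivity))
  set p : ℝ := F⁻¹ * y with hp
  have hp0 : 0 < p := by positivity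
  have hp12 : p ≤ 1/2 := by
    calc p = F⁻¹ * y := hp
      _ ≤ F⁻¹ * 1 := mul_le_mul_of_nonneg_left hy1 (by positivity)
      _ = 1 / F := by rw [mul_one, one_div]
      _ ≤ 1/2 := one_div_le_one_div_of_le (by norm_num) hF2
  have hp1 : p < 1 := by linarith
  -- key exponent identity
  have key : (m:ℝ) ^ (r - 1) * y ^ (r ^ k - 1) = 1 := by
    have e1 : y ^ (r ^ k - 1) = (m:ℝ) ^ (-(1/(q:ℝ)) * ((r ^ k - 1 : ℕ) : ℝ)) := by
      rw [hy, ← Real.rpow_natCast ((m:ℝ) ^ (-(1/(q:ℝ)))) (r ^ k - 1),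
        ← Real.rpow_mul hx0.le]
    have e2 : (m:ℝ) ^ (r - 1) = (m:ℝ) ^ (((r - 1 : ℕ) : ℝ)) :=
      (Real.rpow_natCast _ _).symm
    rw [e1, e2, ← Real.rpow_add hx0]
    have hcast : ((r ^ k - 1 : ℕ) : ℝ) = (q:ℝ) * ((r - 1 : ℕ) : ℝ) := by
      rw [← hqq]; push_cast; ring
    have hz : ((r - 1 : ℕ) : ℝ) + (-(1/(q:ℝ)) * ((r ^ k - 1 : ℕ) : ℝ)) = 0 := by
      rw [hcast]; field_simp; ring
    rw [hz, Real.rpow_zero]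
  -- half bound
  have hhalf : p ^ (r ^ k) * (F * (m:ℝ)) ^ r ≤ p * (m:ℝ) / 2 := by
    have e3 : y ^ (r ^ k) = y ^ (r ^ k - 1) * y := by
      rw [← pow_succ]; congr 1; omega
    have e4 : (m:ℝ) ^ r = (m:ℝ) ^ (r - 1) * (m:ℝ) := by
      rw [← pow_succ]; congr 1; omega
    have e5 : y ^ (r ^ k) * (m:ℝ) ^ r = y * (m:ℝ) := by
      calc y ^ (r ^ k) * (m:ℝ) ^ r
          = ((m:ℝ) ^ (r - 1) * y ^ (r ^ k - 1)) * (y * (m:ℝ)) := by rw [e3, e4]; ring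
        _ = y * (m:ℝ) := by rw [key, one_mul]
    have hconst : F⁻¹ ^ (r ^ k) * F ^ r ≤ F⁻¹ / 2 := by
      have h2F : (2:ℝ) * F ^ (r + 1) ≤ F ^ (r ^ k) := by
        rw [hF]; exact_mod_cast hnat
      rw [inv_pow, inv_mul_le_iff₀ (by positivity)]
      calc F ^ r = (2 * F ^ (r + 1)) * (F⁻¹ / 2) := by field_simp; ring
        _ ≤ F ^ (r ^ k) * (F⁻¹ / 2) := mul_le_mul_of_nonneg_right h2F (by positivity)
    calc p ^ (r ^ k) * (F * (m:ℝ)) ^ r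
        = (F⁻¹ ^ (r ^ k) * F ^ r) * (y ^ (r ^ k) * (m:ℝ) ^ r) := by
          rw [hp, mul_pow, mul_pow]; ring
      _ = (F⁻¹ ^ (r ^ k) * F ^ r) * (y * (m:ℝ)) := by rw [e5]
      _ ≤ (F⁻¹ / 2) * (y * (m:ℝ)) := mul_le_mul_of_nonneg_right hconst (by positivity)
      _ = p * (m:ℝ) / 2 := by rw [hp]; ring
  -- target value
  have hym : y * (m:ℝ) = (m:ℝ) ^ (((q:ℝ) - 1) / (q:ℝ)) := by
    have h1 : (m:ℝ) ^ (-(1/(q:ℝ))) * (m:ℝ) ^ (1:ℝ) = (m:ℝ) ^ (((q:ℝ) - 1) / (q:ℝ)) := by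
      rw [← Real.rpow_add hx0]; congr 1; field_simp; ring
    calc y * (m:ℝ) = (m:ℝ) ^ (-(1/(q:ℝ))) * (m:ℝ) ^ (1:ℝ) := by rw [hy, Real.rpow_one]
      _ = _ := h1
  have htv : 1 / (2 * F) * (m:ℝ) ^ (((q:ℝ) - 1) / (q:ℝ)) = p * (m:ℝ) / 2 := by
    rw [← hym, hp]; ring
  -- gridset cardinality bound (real form)
  have hND : ((gridset k r G G).card : ℝ) ≤ (F * (m:ℝ)) ^ r := by
    have h1 := gridset_card (r := r) huniform
    calc ((gridset k r G G).card : ℝ) ≤ (((k.factorial * G.card) ^ r : ℕ) : ℝ) := by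
          exact_mod_cast h1
      _ = (F * (m:ℝ)) ^ r := by rw [hF, ← hm]; push_cast; ring
  -- the weight function
  set w : Finset (Finset α) → ℝ :=
    fun t => p ^ t.card * (1 - p) ^ (G \ t).card with hw
  have hw0 : ∀ t, 0 < w t := fun t =>
    mul_pos (pow_pos hp0 _) (pow_pos (by linarith) _)
  -- expected number of edges
  have hedges : ∑ t ∈ G.powerset, w t * (t.card : ℝ) = p * (m:ℝ) := by
    rw [hw]
    rw [wsum_card p G, hm]
  -- expected number of grid maps
  have hdel : ∑ t ∈ G.powerset, w t * ((gridset k r G t).card : ℝ)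
      ≤ p ^ (r ^ k) * (F * (m:ℝ)) ^ r := by
    have hgt : ∀ t ∈ G.powerset,
        gridset k r G t = (gridset k r G G).filter (fun φ => pedges k r φ ⊆ t) := by
      intro t ht
      have htG := Finset.mem_powerset.mp ht
      ext φ
      simp only [gridset, Finset.mem_filter]
      constructor
      · rintro ⟨h1, h2, h3⟩; exact ⟨⟨h1, h2, h3.trans htG⟩, h3⟩
      · rintro ⟨⟨h1, h2, _⟩, h3⟩; exact ⟨h1, h2, h3⟩
    calc ∑ t ∈ G.powerset, w t * ((gridset k r G t).card : ℝ)
        = ∑ t ∈ G.powerset, ∑ φ ∈ gridset k r G G,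
            w t * (if pedges k r φ ⊆ t then (1:ℝ) else 0) := by
          refine Finset.sum_congr rfl (fun t ht => ?_)
          rw [hgt t ht, Finset.card_filter, ← Finset.mul_sum]
          push_cast
          rfl
      _ = ∑ φ ∈ gridset k r G G, ∑ t ∈ G.powerset,
            w t * (if pedges k r φ ⊆ t then (1:ℝ) else 0) := Finset.sum_comm
      _ = ∑ φ ∈ gridset k r G G, p ^ (r ^ k) := by
          refine Finset.sum_congr rfl (fun φ hφ => ?_)
          have hφ' : Function.Injective φ ∧ pedges k r φ ⊆ G := by
            simp only [gridset, Finset.mem_filter] at hφ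
            exact hφ.2
          rw [hw]
          rw [wsum_indicator p G (pedges k r φ) hφ'.2, pedges_card hφ'.1]
      _ = ((gridset k r G G).card : ℝ) * p ^ (r ^ k) := by
          rw [Finset.sum_const, nsmul_eq_mul]
      _ ≤ p ^ (r ^ k) * (F * (m:ℝ)) ^ r := by
          rw [mul_comm]
          exact mul_le_mul_of_nonneg_left hND (by positivity)
  -- averaging
  have hwsum : ∑ t ∈ G.powerset, w t = 1 := by
    rw [hw]; exact wsum_one p G
  have havg : 1 / (2 * F) * (m:ℝ) ^ (((q:ℝ) - 1) / (q:ℝ))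
      ≤ ∑ t ∈ G.powerset, w t * ((t.card : ℝ) - ((gridset k r G t).card : ℝ)) := by
    have hsplit : ∑ t ∈ G.powerset, w t * ((t.card : ℝ) - ((gridset k r G t).card : ℝ))
        = ∑ t ∈ G.powerset, w t * (t.card : ℝ)
          - ∑ t ∈ G.powerset, w t * ((gridset k r G t).card : ℝ) := by
      rw [← Finset.sum_sub_distrib]
      exact Finset.sum_congr rfl (fun t _ => by ring)
    rw [hsplit, hedges, htv]
    linarith
  have hex : ∃ t ∈ G.powerset,
      (1 / (2 * F) * (m:ℝ) ^ (((q:ℝ) - 1) / (q:ℝ))) * w t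
        ≤ w t * ((t.card : ℝ) - ((gridset k r G t).card : ℝ)) := by
    refine Finset.exists_le_of_sum_le ⟨∅, Finset.empty_mem_powerset G⟩ ?_
    rw [← Finset.mul_sum, hwsum, mul_one]
    exact havg
  obtain ⟨t, ht, hineq⟩ := hex
  have hvt : 1 / (2 * F) * (m:ℝ) ^ (((q:ℝ) - 1) / (q:ℝ))
      ≤ (t.card : ℝ) - ((gridset k r G t).card : ℝ) := by
    rw [mul_comm (w t)] at hineq
    exact le_of_mul_le_mul_right hineq (hw0 t)
  obtain ⟨G', hG't, hnocopy, hcardG'⟩ := deletion hr1 (Finset.mem_powerset.mp ht)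
  refine ⟨G', hG't.trans (Finset.mem_powerset.mp ht), hnocopy, ?_⟩
  have hc : (t.card : ℝ) ≤ (G'.card : ℝ) + ((gridset k r G t).card : ℝ) := by
    exact_mod_cast hcardG'
  linarith
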